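/- The Tate construction restricted to T is the shifted colocalization (Corollary 2.13 of the paper, stated objectwise): suppose X ∈ T, let ΔX → X → ΛX → ΔX⟦1⟧ be a completion decomposition of X, and let Γ' → ΛX → L' → Γ'⟦1⟧ be a torsion decomposition of ΛX (so L' plays the role of the Tate construction t(X) = LΛX). Then there is an isomorphism L' ≅ ΔX⟦1⟧ in C. -/

import Mathlib

open CategoryTheory CategoryTheory.Limits CategoryTheory.Pretriangulated

universe v u

variable {C : Type u} [Category.{v} C] [HasZeroObject C] [HasShift C ℤ]
  [Preadditive C] [∀ n : ℤ, (shiftFunctor C n).Additive] [Pretriangulated C]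

/-- The orthogonal `T^⊥` of a class of objects `T`: all objects `Y` such that every
morphism `X⟦n⟧ ⟶ Y` with `X ∈ T` is zero. -/
def orth (T : Set C) : Set C :=
  {Y | ∀ X ∈ T, ∀ n : ℤ, ∀ f : X⟦n⟧ ⟶ Y, f = 0}

/-- A triangulated subcategory of `C`, given as a class of objects containing the zero
objects, closed under isomorphism, shifts, and extensions. -/
structure TriangulatedSub (C : Type u) [Category.{v} C] [HasZeroObject C] [HasShift C ℤ]
    [Preadditive C] [∀ n : ℤ, (shiftFunctor C n).Additive] [Pretriangulated C] where
  P : Set C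
  zero_mem : ∀ X : C, IsZero X → X ∈ P
  iso_closed : ∀ ⦃X Y : C⦄, (X ≅ Y) → X ∈ P → Y ∈ P
  shift_closed : ∀ (X : C) (n : ℤ), X ∈ P → X⟦n⟧ ∈ P
  ext_closed : ∀ (Tr : Triangle C), (Tr ∈ distTriang C) → Tr.obj₁ ∈ P → Tr.obj₃ ∈ P → Tr.obj₂ ∈ P

/-- A morphism from an object of `S` to an object of `orth S` vanishes. -/
lemma hom_zero_of_orth {S : Set C} {A Y : C} (hA : A ∈ S) (hY : Y ∈ orth S)
    (φ : A ⟶ Y) : φ = 0 := by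
  have h0 : (shiftFunctorZero C ℤ).hom.app A ≫ φ = 0 := hY A hA 0 _
  calc φ = (shiftFunctorZero C ℤ).inv.app A ≫ ((shiftFunctorZero C ℤ).hom.app A ≫ φ) := by
            simp
    _ = 0 := by rw [h0, comp_zero]

/-- The orthogonal of a shift-closed class is closed under shifts. -/
lemma orth_shift_closed {S : Set C} {Y : C} (hY : Y ∈ orth S) (m : ℤ) :
    Y⟦m⟧ ∈ orth S := by
  intro A hA n h
  have key : (shiftFunctorAdd' C n (-m) (n + -m) rfl).hom.app A ≫
      (shiftFunctor C (-m)).map h ≫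
      (shiftFunctorCompIsoId C m (-m) (by ring)).hom.app Y = 0 :=
    hY A hA (n + -m) _
  have h2 : (shiftFunctor C (-m)).map h = 0 := by
    have := congrArg (fun t => (shiftFunctorAdd' C n (-m) (n + -m) rfl).inv.app A ≫ t ≫
      (shiftFunctorCompIsoId C m (-m) (by ring)).inv.app Y) key
    simpa using this
  have : (shiftFunctor C (-m)).map h = (shiftFunctor C (-m)).map 0 := by
    simpa using h2
  exact (shiftFunctor C (-m)).map_injective this

/-- The Tate construction restricted to `T` is the shifted colocalization (objectwise):
for `X ∈ T` with completion decomposition `ΔX ⟶ X ⟶ ΛX` and a torsion decomposition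
`Γ' ⟶ ΛX ⟶ L'` of `ΛX`, there is an isomorphism `L' ≅ ΔX⟦1⟧`. -/
theorem tate_iso_shift_delta (T : TriangulatedSub C) (X : C) (hX : X ∈ T.P)
    (ΔX ΛX : C) (d : ΔX ⟶ X) (e : X ⟶ ΛX) (f : ΛX ⟶ ΔX⟦(1 : ℤ)⟧)
    (hXdt : Triangle.mk d e f ∈ distTriang C) (hΔ : ΔX ∈ orth T.P)
    (hΛ : ΛX ∈ orth (orth T.P))
    (Γ' L' : C) (g : Γ' ⟶ ΛX) (l : ΛX ⟶ L') (k : L' ⟶ Γ'⟦(1 : ℤ)⟧)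
    (hΛdt : Triangle.mk g l k ∈ distTriang C) (hΓ' : Γ' ∈ T.P) (hL' : L' ∈ orth T.P) :
    Nonempty (L' ≅ ΔX⟦(1 : ℤ)⟧) := by
  -- `e ≫ l = 0` since `X ∈ T` and `L' ∈ T^⊥`.
  have hel : e ≫ l = 0 := hom_zero_of_orth hX hL' _
  -- so `l` factors through `f`: `l = f ≫ φ`.
  obtain ⟨φ, hφ⟩ : ∃ φ : ΔX⟦(1 : ℤ)⟧ ⟶ L', l = f ≫ φ := Triangle.yoneda_exact₃ _ hXdt l hel
  -- `g ≫ f = 0` since `Γ' ∈ T` and `ΔX⟦1⟧ ∈ T^⊥`.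
  have hgf : g ≫ f = 0 := hom_zero_of_orth hΓ' (orth_shift_closed hΔ 1) _
  -- so `f` factors through `l`: `f = l ≫ ψ`.
  obtain ⟨ψ, hψ⟩ : ∃ ψ : L' ⟶ ΔX⟦(1 : ℤ)⟧, f = l ≫ ψ := Triangle.yoneda_exact₂ _ hΛdt f hgf
  refine ⟨Iso.mk ψ φ ?_ ?_⟩
  · -- `ψ ≫ φ = 𝟙 L'`
    have hl : l ≫ (ψ ≫ φ - 𝟙 L') = 0 := by
      rw [Preadditive.comp_sub, ← Category.assoc, ← hψ, ← hφ, Category.comp_id, sub_self]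
    obtain ⟨β, hβ⟩ : ∃ β : Γ'⟦(1 : ℤ)⟧ ⟶ L', ψ ≫ φ - 𝟙 L' = k ≫ β :=
      Triangle.yoneda_exact₃ _ hΛdt _ hl
    have hβ0 : β = 0 := hL' Γ' hΓ' 1 β
    rw [hβ0, comp_zero] at hβ
    rw [sub_eq_zero] at hβ
    exact hβ
  · -- `φ ≫ ψ = 𝟙 ΔX⟦1⟧`
    have hf : f ≫ (φ ≫ ψ - 𝟙 _) = 0 := by
      rw [Preadditive.comp_sub, ← Category.assoc, ← hφ, ← hψ, Category.comp_id, sub_self]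
    obtain ⟨β, hβ⟩ : ∃ β : X⟦(1 : ℤ)⟧ ⟶ ΔX⟦(1 : ℤ)⟧,
        φ ≫ ψ - 𝟙 _ = (-(shiftFunctor C (1 : ℤ)).map d) ≫ β :=
      Triangle.yoneda_exact₃ _ (rot_of_distTriang _ hXdt) _ hf
    have hβ0 : β = 0 :=
      hom_zero_of_orth (T.shift_closed X 1 hX) (orth_shift_closed hΔ 1) β
    rw [hβ0, comp_zero] at hβ
    rw [sub_eq_zero] at hβ
    exact hβ
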